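/- arXiv:2306.14520 — 2 statements merged into one kernel-verified Lean document; each statement's English description precedes it below -/
import Mathlib

section
/- Let f : (k+1)^E → ℝ≥0 be monotone and k-submodular. Suppose s⁰ ⪯ s¹ ⪯ ⋯ ⪯ s^p and o⁰, o¹, …, o^p are sequences in (k+1)^E such that s^j = s^{j-1} ⊔ I_{[e^j, i^j]} with e^j ∉ P(s^{j-1}), o^j = (o^{j-1} ⊔ I_{[e^j,i^j]}) ⊔ I_{[e^j,i^j]}, s^{j-1} ⪯ o^{j-1} ⊔ I_{[e^j,i^j]}, s^{j-1} ⪯ o^{j-1}, and i^j maximizes Δ_{e^j,·} f(s^{j-1}). Then for each j ∈ [p], f(o^{j-1}) - f(o^j) ≤ f(s^j) - f(s^{j-1}). -/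
open Finset

/-- Join `⊔` on `(k+1)^E`, where a `k`-tuple of pairwise disjoint subsets of `E`
is represented as a function `E → Option (Fin k)`. -/
def ksup {E : Type*} {k : ℕ} (x y : E → Option (Fin k)) : E → Option (Fin k) :=
  fun e => match x e, y e with
  | none, b => b
  | some i, none => some i
  | some i, some j => if i = j then some i else none

/-- Meet `⊓` on `(k+1)^E`. -/
def kinf {E : Type*} {k : ℕ} (x y : E → Option (Fin k)) : E → Option (Fin k) :=
  fun e => match x e, y e with
  | some i, some j => if i = j then some i else none
  | _, _ => none

/-- The partial order `x ⪯ y` : `X_i ⊆ Y_i` for all `i`. -/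
def kle {E : Type*} {k : ℕ} (x y : E → Option (Fin k)) : Prop :=
  ∀ e i, x e = some i → y e = some i

/-- `I_{[e,i]}`: the `k`-tuple with `{e}` in coordinate `i` and `∅` elsewhere. -/
def ksingle {E : Type*} [DecidableEq E] {k : ℕ} (e : E) (i : Fin k) : E → Option (Fin k) :=
  fun e' => if e' = e then some i else none

/-- Marginal gain `Δ_{e,i} f(x) = f(x ⊔ I_{[e,i]}) - f(x)`. -/
def marg {E : Type*} [DecidableEq E] {k : ℕ} (f : (E → Option (Fin k)) → ℝ)
    (x : E → Option (Fin k)) (e : E) (i : Fin k) : ℝ :=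
  f (ksup x (ksingle e i)) - f x

/-- `f` is `k`-submodular: `f(x⊔y) + f(x⊓y) ≤ f(x) + f(y)`. -/
def KSubmodular {E : Type*} {k : ℕ} (f : (E → Option (Fin k)) → ℝ) : Prop :=
  ∀ x y, f (ksup x y) + f (kinf x y) ≤ f x + f y

/-- The support `P(x) = ⋃ᵢ Xᵢ` as a finset. -/
def suppK {E : Type*} [Fintype E] {k : ℕ} (x : E → Option (Fin k)) : Finset E :=
  Finset.univ.filter fun e => x e ≠ none

/-- Orthant submodularity. -/
def OrthantSubmodular {E : Type*} [DecidableEq E] {k : ℕ}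
    (f : (E → Option (Fin k)) → ℝ) : Prop :=
  ∀ x y, kle x y → ∀ e, y e = none → ∀ i, marg f y e i ≤ marg f x e i

/-- Pairwise monotonicity. -/
def PairwiseMonotone {E : Type*} [DecidableEq E] {k : ℕ}
    (f : (E → Option (Fin k)) → ℝ) : Prop :=
  ∀ x e, x e = none → ∀ i j : Fin k, i ≠ j → 0 ≤ marg f x e i + marg f x e j

/-- Monotonicity with respect to `⪯`. -/
def KMonotone {E : Type*} {k : ℕ} (f : (E → Option (Fin k)) → ℝ) : Prop :=
  ∀ x y, kle x y → f x ≤ f y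

lemma ksup_at_none_left {E : Type*} {k : ℕ}
    {x y : E → Option (Fin k)} {e : E} (h : x e = none) : ksup x y e = y e := by
  simp only [ksup, h]

lemma ksup_at_none_right {E : Type*} {k : ℕ}
    {x y : E → Option (Fin k)} {e : E} (h : y e = none) : ksup x y e = x e := by
  simp only [ksup, h]
  cases x e <;> rfl

lemma ksup_at_some_some {E : Type*} {k : ℕ}
    {x y : E → Option (Fin k)} {e : E} {i : Fin k}
    (hx : x e = some i) (hy : y e = some i) : ksup x y e = some i := by
  simp [ksup, hx, hy]

lemma kinf_at_none_left {E : Type*} {k : ℕ}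
    {x y : E → Option (Fin k)} {e : E} (h : x e = none) : kinf x y e = none := by
  simp only [kinf, h]

lemma kinf_at_none_right {E : Type*} {k : ℕ}
    {x y : E → Option (Fin k)} {e : E} (h : y e = none) : kinf x y e = none := by
  simp only [kinf, h]
  cases x e <;> rfl

lemma kinf_at_some_some {E : Type*} {k : ℕ}
    {x y : E → Option (Fin k)} {e : E} {i : Fin k}
    (hx : x e = some i) (hy : y e = some i) : kinf x y e = some i := by
  simp [kinf, hx, hy]

lemma ksingle_self {E : Type*} [DecidableEq E] {k : ℕ} (e : E) (i : Fin k) :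
    ksingle e i e = some i := by simp [ksingle]

lemma ksingle_ne {E : Type*} [DecidableEq E] {k : ℕ} {e e' : E} (h : e' ≠ e) (i : Fin k) :
    ksingle e i e' = none := by simp [ksingle, h]

lemma ksup_single_ne {E : Type*} [DecidableEq E] {k : ℕ}
    (x : E → Option (Fin k)) {e e' : E} (h : e' ≠ e) (i : Fin k) :
    ksup x (ksingle e i) e' = x e' :=
  ksup_at_none_right (ksingle_ne h i)

lemma ksup_single_none {E : Type*} [DecidableEq E] {k : ℕ}
    (x : E → Option (Fin k)) {e : E} (hx : x e = none) (i : Fin k) :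
    ksup x (ksingle e i) e = some i := by
  rw [ksup_at_none_left hx, ksingle_self]

lemma ksup_single_same {E : Type*} [DecidableEq E] {k : ℕ}
    (x : E → Option (Fin k)) {e : E} {i : Fin k} (hx : x e = some i) :
    ksup x (ksingle e i) e = some i :=
  ksup_at_some_some hx (ksingle_self e i)

lemma ksup_single_other {E : Type*} [DecidableEq E] {k : ℕ}
    (x : E → Option (Fin k)) {e : E} {i j : Fin k} (hx : x e = some j) (hij : j ≠ i) :
    ksup x (ksingle e i) e = none := by
  simp [ksup, hx, ksingle_self, hij]

lemma kle_ksup_single {E : Type*} [DecidableEq E] {k : ℕ}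
    (x : E → Option (Fin k)) (e : E) (i : Fin k) (hx : x e = none) :
    kle x (ksup x (ksingle e i)) := by
  intro e' j hj
  by_cases h : e' = e
  · subst h; rw [hx] at hj; cases hj
  · rw [ksup_single_ne x h, hj]

lemma marg_nonneg {E : Type*} [DecidableEq E] {k : ℕ}
    {f : (E → Option (Fin k)) → ℝ} (hmono : KMonotone f)
    (x : E → Option (Fin k)) (e : E) (i : Fin k) (hx : x e = none) :
    0 ≤ marg f x e i := by
  have := hmono x (ksup x (ksingle e i)) (kle_ksup_single x e i hx)
  unfold marg; linarith

lemma orthant_of_ksub {E : Type*} [DecidableEq E] {k : ℕ}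
    {f : (E → Option (Fin k)) → ℝ} (hf : KSubmodular f) :
    OrthantSubmodular f := by
  intro x y hxy e he i
  have hxe : x e = none := by
    cases hx : x e with
    | none => rfl
    | some j => rw [hxy e j hx] at he; cases he
  have h1 : ksup (ksup x (ksingle e i)) y = ksup y (ksingle e i) := by
    funext e'
    by_cases h : e' = e
    · subst h
      rw [ksup_at_none_right he, ksup_single_none x hxe i, ksup_single_none y he i]
    · rw [ksup_single_ne y h]
      cases hx : x e' with
      | none =>
        have hb : ksup x (ksingle e i) e' = none := by rw [ksup_single_ne x h, hx]
        rw [ksup_at_none_left hb]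
      | some j =>
        have hy := hxy e' j hx
        have hb : ksup x (ksingle e i) e' = some j := by rw [ksup_single_ne x h, hx]
        rw [ksup_at_some_some hb hy, hy]
  have h2 : kinf (ksup x (ksingle e i)) y = x := by
    funext e'
    by_cases h : e' = e
    · subst h
      rw [kinf_at_none_right he, hxe]
    · cases hx : x e' with
      | none =>
        have hb : ksup x (ksingle e i) e' = none := by rw [ksup_single_ne x h, hx]
        rw [kinf_at_none_left hb]
      | some j =>
        have hy := hxy e' j hx
        have hb : ksup x (ksingle e i) e' = some j := by rw [ksup_single_ne x h, hx]
        rw [kinf_at_some_some hb hy]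
  have := hf (ksup x (ksingle e i)) y
  rw [h1, h2] at this
  unfold marg; linarith

theorem stmt_12 {E : Type*} [Fintype E] [DecidableEq E] {k p : ℕ} (hk : 0 < k)
    (f : (E → Option (Fin k)) → ℝ) (hf : KSubmodular f) (hmono : KMonotone f)
    (hnn : ∀ x, 0 ≤ f x)
    (s o : ℕ → (E → Option (Fin k))) (e : ℕ → E) (idx : ℕ → Fin k)
    (hnew : ∀ j, 1 ≤ j → j ≤ p → s (j - 1) (e j) = none)
    (hs : ∀ j, 1 ≤ j → j ≤ p → s j = ksup (s (j - 1)) (ksingle (e j) (idx j)))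
    (ho : ∀ j, 1 ≤ j → j ≤ p → o j =
      ksup (ksup (o (j - 1)) (ksingle (e j) (idx j))) (ksingle (e j) (idx j)))
    (hle1 : ∀ j, 1 ≤ j → j ≤ p →
      kle (s (j - 1)) (ksup (o (j - 1)) (ksingle (e j) (idx j))))
    (hle2 : ∀ j, 1 ≤ j → j ≤ p → kle (s (j - 1)) (o (j - 1)))
    (hgreedy : ∀ j, 1 ≤ j → j ≤ p →
      ∀ i : Fin k, marg f (s (j - 1)) (e j) i ≤ marg f (s (j - 1)) (e j) (idx j)) :
    ∀ j, 1 ≤ j → j ≤ p → f (o (j - 1)) - f (o j) ≤ f (s j) - f (s (j - 1)) := by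
  intro j hj1 hjp
  have hspx : s (j - 1) (e j) = none := hnew j hj1 hjp
  have hRHS : f (s j) - f (s (j - 1)) = marg f (s (j - 1)) (e j) (idx j) := by
    rw [hs j hj1 hjp]; unfold marg; ring
  have hRHSnn : 0 ≤ marg f (s (j - 1)) (e j) (idx j) :=
    marg_nonneg hmono _ _ _ hspx
  have hoj := ho j hj1 hjp
  rcases hax : o (j - 1) (e j) with _ | i
  · -- o(j-1) is none at e j
    have hoj' : o j = ksup (o (j - 1)) (ksingle (e j) (idx j)) := by
      rw [hoj]
      funext e'
      by_cases h : e' = e j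
      · subst h
        have hb := ksup_single_none _ hax (idx j)
        rw [ksup_single_same _ hb, hb]
      · rw [ksup_single_ne _ h, ksup_single_ne _ h]
    have hle : f (o (j - 1)) ≤ f (o j) := by
      rw [hoj']; exact hmono _ _ (kle_ksup_single _ _ _ hax)
    rw [hRHS]; linarith
  · by_cases hii : i = idx j
    · subst hii
      have hoj' : o j = ksup (o (j - 1)) (ksingle (e j) (idx j)) := by
        rw [hoj]
        funext e'
        by_cases h : e' = e j
        · subst h
          have hb := ksup_single_same _ hax
          rw [ksup_single_same _ hb, hb]
        · rw [ksup_single_ne _ h, ksup_single_ne _ h]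
      have hkle : kle (o (j - 1)) (ksup (o (j - 1)) (ksingle (e j) (idx j))) := by
        intro e' j' hj'
        by_cases h : e' = e j
        · subst h
          rw [hax] at hj'
          cases hj'
          exact ksup_single_same _ hax
        · rw [ksup_single_ne _ h, hj']
      have hle : f (o (j - 1)) ≤ f (o j) := by
        rw [hoj']; exact hmono _ _ hkle
      rw [hRHS]; linarith
    · -- the interesting case
      have hbx : ksup (o (j - 1)) (ksingle (e j) (idx j)) (e j) = none :=
        ksup_single_other _ hax hii
      have hab : o (j - 1) =
          ksup (ksup (o (j - 1)) (ksingle (e j) (idx j))) (ksingle (e j) i) := by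
        funext e'
        by_cases h : e' = e j
        · subst h
          rw [ksup_single_none _ hbx i, hax]
        · rw [ksup_single_ne _ h, ksup_single_ne _ h]
      have hkleb : kle (s (j - 1)) (ksup (o (j - 1)) (ksingle (e j) (idx j))) :=
        hle1 j hj1 hjp
      have h1 : marg f (ksup (o (j - 1)) (ksingle (e j) (idx j))) (e j) i ≤
          marg f (s (j - 1)) (e j) i :=
        orthant_of_ksub hf _ _ hkleb _ hbx i
      have h2 := hgreedy j hj1 hjp i
      have h3 : 0 ≤ marg f (ksup (o (j - 1)) (ksingle (e j) (idx j))) (e j) (idx j) :=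
        marg_nonneg hmono _ _ _ hbx
      have hfa : f (o (j - 1)) = f (ksup (o (j - 1)) (ksingle (e j) (idx j))) +
          marg f (ksup (o (j - 1)) (ksingle (e j) (idx j))) (e j) i := by
        conv_lhs => rw [hab]
        unfold marg; ring
      have hfoj : f (o j) = f (ksup (o (j - 1)) (ksingle (e j) (idx j))) +
          marg f (ksup (o (j - 1)) (ksingle (e j) (idx j))) (e j) (idx j) := by
        rw [hoj]; unfold marg; ring
      rw [hRHS, hfa, hfoj]
      unfold marg at *
      linarith
end

section
/- Let f : (k+1)^E → ℝ≥0 be k-submodular with k ≥ 2 (not necessarily monotone). Under the same sequence setup as the monotone per-iteration lemma (s^j = s^{j-1} ⊔ I_{[e^j,i^j]}, o^j = (o^{j-1} ⊔ I_{[e^j,i^j]}) ⊔ I_{[e^j,i^j]}, s^{j-1} ⪯ o^{j-1} ⊔ I_{[e^j,i^j]}, s^{j-1} ⪯ o^{j-1}, and i^j maximizing Δ_{e^j,·} f(s^{j-1})), we have f(o^{j-1}) - f(o^j) ≤ 2·[f(s^j) - f(s^{j-1})] for each j ∈ [p]. -/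
open Finset

section Aux
variable {E : Type*} [DecidableEq E] {k : ℕ}

lemma ksup_apply_none_left {x y : E → Option (Fin k)} {e : E} (h : x e = none) :
    ksup x y e = y e := by
  unfold ksup; rw [h]

lemma ksup_apply_none_right {x y : E → Option (Fin k)} {e : E} (h : y e = none) :
    ksup x y e = x e := by
  unfold ksup; rw [h]; cases x e <;> rfl

lemma ksup_apply_some_some {x y : E → Option (Fin k)} {e : E} {i : Fin k}
    (h1 : x e = some i) (h2 : y e = some i) : ksup x y e = some i := by
  unfold ksup; rw [h1, h2]; simp

lemma ksup_apply_some_ne {x y : E → Option (Fin k)} {e : E} {i j : Fin k}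
    (h1 : x e = some i) (h2 : y e = some j) (hij : i ≠ j) : ksup x y e = none := by
  unfold ksup; rw [h1, h2]; simp [hij]

lemma kinf_apply_none_left {x y : E → Option (Fin k)} {e : E} (h : x e = none) :
    kinf x y e = none := by
  unfold kinf; rw [h]

lemma kinf_apply_none_right {x y : E → Option (Fin k)} {e : E} (h : y e = none) :
    kinf x y e = none := by
  unfold kinf; rw [h]; cases x e <;> rfl

lemma kinf_apply_some_some {x y : E → Option (Fin k)} {e : E} {i : Fin k}
    (h1 : x e = some i) (h2 : y e = some i) : kinf x y e = some i := by
  unfold kinf; rw [h1, h2]; simp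

lemma kinf_apply_some_ne {x y : E → Option (Fin k)} {e : E} {i j : Fin k}
    (h1 : x e = some i) (h2 : y e = some j) (hij : i ≠ j) : kinf x y e = none := by
  unfold kinf; rw [h1, h2]; simp [hij]

lemma ksingle_apply_self (e : E) (i : Fin k) : ksingle e i e = some i := by
  simp [ksingle]

lemma ksingle_apply_ne {e e' : E} (h : e' ≠ e) (i : Fin k) : ksingle e i e' = none := by
  simp [ksingle, h]

lemma pm_of_ksub (f : (E → Option (Fin k)) → ℝ) (hf : KSubmodular f) :
    PairwiseMonotone f := by
  intro x e hx i j hij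
  set a := ksup x (ksingle e i) with ha
  set b := ksup x (ksingle e j) with hb
  have hae : a e = some i := by rw [ha, ksup_apply_none_left hx, ksingle_apply_self]
  have hbe : b e = some j := by rw [hb, ksup_apply_none_left hx, ksingle_apply_self]
  have hax : ∀ e', e' ≠ e → a e' = x e' := fun e' h => by
    rw [ha, ksup_apply_none_right (ksingle_apply_ne h i)]
  have hbx : ∀ e', e' ≠ e → b e' = x e' := fun e' h => by
    rw [hb, ksup_apply_none_right (ksingle_apply_ne h j)]
  have h1 : ksup a b = x := by
    funext e'
    by_cases h : e' = e
    · subst h; rw [ksup_apply_some_ne hae hbe hij, hx]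
    · rcases h2 : x e' with _ | m
      · rw [ksup_apply_none_left, hbx e' h, h2]; rw [hax e' h, h2]
      · exact ksup_apply_some_some (by rw [hax e' h, h2]) (by rw [hbx e' h, h2])
  have h2 : kinf a b = x := by
    funext e'
    by_cases h : e' = e
    · subst h; rw [kinf_apply_some_ne hae hbe hij, hx]
    · rcases h2 : x e' with _ | m
      · rw [kinf_apply_none_left]; rw [hax e' h, h2]
      · exact kinf_apply_some_some (by rw [hax e' h, h2]) (by rw [hbx e' h, h2])
  have := hf a b
  rw [h1, h2] at this
  simp only [marg, ← ha, ← hb]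
  linarith

lemma os_of_ksub (f : (E → Option (Fin k)) → ℝ) (hf : KSubmodular f) :
    OrthantSubmodular f := by
  intro x y hxy e he i
  have hxe : x e = none := by
    rcases h : x e with _ | m
    · rfl
    · have := hxy e m h; rw [he] at this; exact absurd this (by simp)
  set a := ksup x (ksingle e i) with ha
  have hae : a e = some i := by rw [ha, ksup_apply_none_left hxe, ksingle_apply_self]
  have hax : ∀ e', e' ≠ e → a e' = x e' := fun e' h => by
    rw [ha, ksup_apply_none_right (ksingle_apply_ne h i)]
  have h1 : ksup a y = ksup y (ksingle e i) := by
    funext e'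
    by_cases h : e' = e
    · subst h
      rw [ksup_apply_none_right he, hae, ksup_apply_none_left he, ksingle_apply_self]
    · rw [ksup_apply_none_right (ksingle_apply_ne h i)]
      rcases h2 : x e' with _ | m
      · rw [ksup_apply_none_left (by rw [hax e' h, h2])]
      · have hy : y e' = some m := hxy e' m h2
        rw [ksup_apply_some_some (by rw [hax e' h, h2]) hy, hy]
  have h2 : kinf a y = x := by
    funext e'
    by_cases h : e' = e
    · subst h; rw [kinf_apply_none_right he, hxe]
    · rcases h2 : x e' with _ | m
      · rw [kinf_apply_none_left (by rw [hax e' h, h2])]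
      · exact kinf_apply_some_some (by rw [hax e' h, h2]) (hxy e' m h2)
  have := hf a y
  rw [h1, h2] at this
  simp only [marg, ← ha]
  linarith

end Aux

theorem stmt_13 {E : Type*} [Fintype E] [DecidableEq E] {k p : ℕ} (hk : 2 ≤ k)
    (f : (E → Option (Fin k)) → ℝ) (hf : KSubmodular f) (hnn : ∀ x, 0 ≤ f x)
    (s o : ℕ → (E → Option (Fin k))) (e : ℕ → E) (idx : ℕ → Fin k)
    (hnew : ∀ j, 1 ≤ j → j ≤ p → s (j - 1) (e j) = none)
    (hs : ∀ j, 1 ≤ j → j ≤ p → s j = ksup (s (j - 1)) (ksingle (e j) (idx j)))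
    (ho : ∀ j, 1 ≤ j → j ≤ p → o j =
      ksup (ksup (o (j - 1)) (ksingle (e j) (idx j))) (ksingle (e j) (idx j)))
    (hle1 : ∀ j, 1 ≤ j → j ≤ p →
      kle (s (j - 1)) (ksup (o (j - 1)) (ksingle (e j) (idx j))))
    (hle2 : ∀ j, 1 ≤ j → j ≤ p → kle (s (j - 1)) (o (j - 1)))
    (hgreedy : ∀ j, 1 ≤ j → j ≤ p →
      ∀ i : Fin k, marg f (s (j - 1)) (e j) i ≤ marg f (s (j - 1)) (e j) (idx j)) :
    ∀ j, 1 ≤ j → j ≤ p → f (o (j - 1)) - f (o j) ≤ 2 * (f (s j) - f (s (j - 1))) := by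
  intro j hj1 hjp
  have hpm := pm_of_ksub f hf
  have hos := os_of_ksub f hf
  set t := s (j - 1) with ht
  set o' := o (j - 1) with ho'
  have hnone : t (e j) = none := hnew j hj1 hjp
  set ej := e j
  set ij := idx j
  -- a second coordinate
  have : Nontrivial (Fin k) := by
    apply Fin.nontrivial_iff_two_le.mpr hk
  obtain ⟨i0, hi0⟩ := exists_ne ij
  have hy0 : 0 ≤ marg f t ej ij := by
    have h1 := hpm t ej hnone i0 ij hi0
    have h2 := hgreedy j hj1 hjp i0
    linarith
  have hsj : f (s j) - f t = marg f t ej ij := by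
    rw [hs j hj1 hjp]; rfl
  rw [hsj]
  have hoj := ho j hj1 hjp
  rcases hoe : o' ej with _ | i'
  · -- o' ej = none
    have hoj2 : o j = ksup o' (ksingle ej ij) := by
      rw [hoj]
      funext e'
      by_cases h : e' = ej
      · subst h
        rw [ksup_apply_some_some (ksup_apply_none_left hoe ▸ ksingle_apply_self ej ij)
          (ksingle_apply_self ej ij)]
        rw [ksup_apply_none_left hoe, ksingle_apply_self]
      · rw [ksup_apply_none_right (ksingle_apply_ne h ij)]
    have hlhs : f o' - f (o j) = -(marg f o' ej ij) := by
      rw [hoj2]; simp [marg]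
    rw [hlhs]
    have h1 := hpm o' ej hoe i0 ij hi0
    have h2 := hos t o' (hle2 j hj1 hjp) ej hoe i0
    have h3 := hgreedy j hj1 hjp i0
    linarith
  · by_cases hii : i' = ij
    · -- already agrees
      subst hii
      have hoj2 : o j = o' := by
        rw [hoj]
        funext e'
        by_cases h : e' = ej
        · subst h
          have hw : ksup o' (ksingle ej ij) ej = some ij :=
            ksup_apply_some_some hoe (ksingle_apply_self ej ij)
          rw [ksup_apply_some_some hw (ksingle_apply_self ej ij), hoe]
        · rw [ksup_apply_none_right (ksingle_apply_ne h ij),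
            ksup_apply_none_right (ksingle_apply_ne h ij)]
      rw [hoj2]
      simp
      linarith
    · -- conflict
      set w := ksup o' (ksingle ej ij) with hw
      have hwe : w ej = none := ksup_apply_some_ne hoe (ksingle_apply_self ej ij) hii
      have hwx : ∀ e', e' ≠ ej → w e' = o' e' := fun e' h => by
        rw [hw, ksup_apply_none_right (ksingle_apply_ne h ij)]
      have hoj2 : o j = ksup w (ksingle ej ij) := by rw [hoj]
      have ho'w : o' = ksup w (ksingle ej i') := by
        funext e'
        by_cases h : e' = ej
        · subst h; rw [ksup_apply_none_left hwe, ksingle_apply_self, hoe]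
        · rw [ksup_apply_none_right (ksingle_apply_ne h i'), hwx e' h]
      have htw : kle t w := hle1 j hj1 hjp
      have hlhs : f o' - f (o j) = marg f w ej i' - marg f w ej ij := by
        rw [hoj2]
        conv_lhs => rw [ho'w]
        simp [marg]
      rw [hlhs]
      have h1 := hpm w ej hwe i' ij hii
      have h2 := hos t w htw ej hwe i'
      have h3 := hgreedy j hj1 hjp i'
      linarith
end
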